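/- arXiv:2105.08522 — 4 statements merged into one kernel-verified Lean document; each statement's English description precedes it below -/
import Mathlib

section
/- Let $\mu$ be a positive Borel measure on $[0,1]$ and suppose there exists $\gamma > 0$ such that $\mu([1-x,1]) \le \gamma x$ for all $x \in [0,1]$. Then the moment sequence $c_j = \int_0^1 x^j\, d\mu(x)$ satisfies $c_j \le \gamma/(j+1)$ for all $j \ge 1$. -/
open MeasureTheory Set

/-- If `μ([1-x,1]) ≤ γ x` for all `x ∈ [0,1]`, then the moments satisfy
`c_j = ∫₀¹ x^j dμ(x) ≤ γ/(j+1)` for `j ≥ 1`. -/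
theorem widom_c_implies_b
    (μ : Measure ℝ) (hsupp : μ (Icc (0:ℝ) 1)ᶜ = 0)
    (γ : ℝ) (hγ : 0 < γ)
    (hbound : ∀ x ∈ Icc (0:ℝ) 1, μ (Icc (1 - x) 1) ≤ ENNReal.ofReal (γ * x)) :
    ∀ j : ℕ, 1 ≤ j →
      ∫⁻ x in Icc (0:ℝ) 1, ENNReal.ofReal (x ^ j) ∂μ
        ≤ ENNReal.ofReal (γ / (j + 1)) := by
  intro j hj
  have hj0 : (j : ℝ) ≠ 0 := Nat.cast_ne_zero.mpr (by omega)
  have hjpos : (0:ℝ) < j := by positivity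
  set r : ℝ := 1 / j with hr
  have hrpos : 0 < r := by positivity
  -- layer cake
  have hlayer : ∫⁻ x in Icc (0:ℝ) 1, ENNReal.ofReal (x ^ j) ∂μ
      = ∫⁻ t in Ioi (0:ℝ), (μ.restrict (Icc 0 1)) {x | t < x ^ j} := by
    apply lintegral_eq_lintegral_meas_lt
    · filter_upwards [ae_restrict_mem measurableSet_Icc] with x hx
      exact pow_nonneg hx.1 j
    · exact (measurable_id.pow_const j).aemeasurable
  rw [hlayer]
  -- pointwise bound on the measure of superlevel sets
  have hb : ∀ t ∈ Ioi (0:ℝ), (μ.restrict (Icc 0 1)) {x | t < x ^ j}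
      ≤ (Ioc (0:ℝ) 1).indicator (fun t => ENNReal.ofReal (γ * (1 - t ^ r))) t := by
    intro t ht
    have hmble : MeasurableSet {x : ℝ | t < x ^ j} :=
      measurableSet_lt measurable_const (measurable_id.pow_const j)
    rw [Measure.restrict_apply hmble]
    by_cases ht1 : t ≤ 1
    · have htIoc : t ∈ Ioc (0:ℝ) 1 := ⟨ht, ht1⟩
      rw [indicator_of_mem htIoc]
      have htr1 : t ^ r ≤ 1 :=
        Real.rpow_le_one (le_of_lt ht) ht1 (le_of_lt hrpos)
      have htr0 : 0 ≤ t ^ r := Real.rpow_nonneg (le_of_lt ht) r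
      have hsub : {x : ℝ | t < x ^ j} ∩ Icc 0 1 ⊆ Icc (t ^ r) 1 := by
        rintro x ⟨hx1, hx2, hx3⟩
        refine ⟨?_, hx3⟩
        have : t ^ r ≤ (x ^ j) ^ r :=
          Real.rpow_le_rpow (le_of_lt ht) (le_of_lt hx1) (le_of_lt hrpos)
        calc t ^ r ≤ (x ^ j) ^ r := this
          _ = x := by
            rw [← Real.rpow_natCast x j, ← Real.rpow_mul hx2]
            rw [hr]
            field_simp
            simp
      calc μ ({x : ℝ | t < x ^ j} ∩ Icc 0 1) ≤ μ (Icc (t ^ r) 1) := measure_mono hsub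
        _ = μ (Icc (1 - (1 - t ^ r)) 1) := by ring_nf
        _ ≤ ENNReal.ofReal (γ * (1 - t ^ r)) :=
            hbound (1 - t ^ r) ⟨by linarith, by linarith⟩
    · push_neg at ht1
      have : {x : ℝ | t < x ^ j} ∩ Icc 0 1 = ∅ := by
        ext x
        simp only [mem_inter_iff, mem_setOf_eq, mem_Icc, mem_empty_iff_false, iff_false]
        rintro ⟨hx1, hx2, hx3⟩
        have : x ^ j ≤ 1 := pow_le_one₀ hx2 hx3
        linarith
      rw [this, measure_empty]
      exact zero_le
  -- integrate the bound
  have hmono : ∫⁻ t in Ioi (0:ℝ), (μ.restrict (Icc 0 1)) {x | t < x ^ j}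
      ≤ ∫⁻ t in Ioi (0:ℝ),
          (Ioc (0:ℝ) 1).indicator (fun t => ENNReal.ofReal (γ * (1 - t ^ r))) t := by
    apply setLIntegral_mono' measurableSet_Ioi hb
  refine le_trans hmono ?_
  rw [lintegral_indicator measurableSet_Ioc _, Measure.restrict_restrict measurableSet_Ioc,
    Ioc_inter_Ioi, sup_of_le_left (le_refl (0:ℝ))]
  -- compute the integral
  have hint : IntegrableOn (fun t : ℝ => γ * (1 - t ^ r)) (Ioc (0:ℝ) 1) := by
    apply Integrable.const_mul
    exact Integrable.sub (integrableOn_const measure_Ioc_lt_top.ne)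
      (intervalIntegral.intervalIntegrable_rpow' (by linarith)).1
  have hnn : 0 ≤ᵐ[volume.restrict (Ioc (0:ℝ) 1)] fun t : ℝ => γ * (1 - t ^ r) := by
    filter_upwards [ae_restrict_mem measurableSet_Ioc] with t ht
    have : t ^ r ≤ 1 := Real.rpow_le_one (le_of_lt ht.1) ht.2 (le_of_lt hrpos)
    simp only [Pi.zero_apply]
    exact mul_nonneg hγ.le (by linarith)
  rw [← ofReal_integral_eq_lintegral_ofReal hint hnn]
  · apply ENNReal.ofReal_le_ofReal
    have h1 : ∫ t in Ioc (0:ℝ) 1, γ * (1 - t ^ r)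
        = ∫ t in (0:ℝ)..1, γ * (1 - t ^ r) := by
      rw [intervalIntegral.integral_of_le zero_le_one]
    rw [h1]
    have h2 : ∫ t in (0:ℝ)..1, t ^ r = (1:ℝ) / (r + 1) := by
      rw [integral_rpow (Or.inl (by linarith))]
      rw [Real.one_rpow, Real.zero_rpow (by linarith)]
      ring
    rw [intervalIntegral.integral_const_mul, intervalIntegral.integral_sub
      intervalIntegrable_const (intervalIntegral.intervalIntegrable_rpow' (by linarith)), h2]
    simp only [intervalIntegral.integral_const, smul_eq_mul, sub_zero, mul_one]
    apply le_of_eq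
    rw [hr]
    have h3 : (1:ℝ)/(j:ℝ) + 1 ≠ 0 := by positivity
    have h4 : (j:ℝ) + 1 ≠ 0 := by positivity
    have key : (1:ℝ)/(j:ℝ) + 1 = ((j:ℝ)+1)/(j:ℝ) := by field_simp; ring
    rw [key, one_div_div]
    rw [eq_div_iff h4]
    field_simp
    ring
end

section
/- Let $\mu$ be a finite positive Borel measure on $[0,1]$ with moments $c_j = \int_0^1 x^j\,d\mu(x)$ satisfying $c_n \le \beta/(n+1)$ for all $n \ge 0$ and some $\beta > 0$. Then for every square-summable sequence $(a_n)_{n \ge 0}$ of complex numbers, $\left|\sum_{n,m \ge 0} c_{n+m} \overline{a_n} a_m\right| \le \beta \pi \sum_{n \ge 0} |a_n|^2$. -/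
open MeasureTheory Set
open scoped ComplexConjugate

set_option maxHeartbeats 1000000

section WidomAux
open Real


lemma arctan_lower {x : ℝ} (hx : 0 ≤ x) :
    Real.sqrt 2 * x / (2 + x ^ 2) ≤ Real.arctan x := by
  set s := Real.sqrt 2 with hs
  have hs2 : s ^ 2 = 2 := Real.sq_sqrt (by norm_num)
  have hs0 : 0 ≤ s := Real.sqrt_nonneg 2
  have hsle : s ≤ 2 := by nlinarith
  set G : ℝ → ℝ := fun t => Real.arctan t - s * t / (2 + t ^ 2) with hG
  have key : ∀ y : ℝ, HasDerivAt G
      (1 / (1 + y ^ 2) - s * (2 - y ^ 2) / (2 + y ^ 2) ^ 2) y := by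
    intro y
    have hden : (2 + y ^ 2) ≠ 0 := by positivity
    have h1 : HasDerivAt (fun t : ℝ => s * t) s y := by
      simpa using (hasDerivAt_id y).const_mul s
    have h2 : HasDerivAt (fun t : ℝ => 2 + t ^ 2) (2 * y) y := by
      simpa using ((hasDerivAt_pow 2 y).const_add 2)
    have h3 := h1.div h2 hden
    have harc := Real.hasDerivAt_arctan y
    refine (harc.sub h3).congr_deriv (Eq.symm ?_)
    ring
  have mono : MonotoneOn G (Ici 0) := by
    apply monotoneOn_of_deriv_nonneg (convex_Ici 0)
    · exact fun y _ => (key y).continuousAt.continuousWithinAt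
    · exact fun y _ => (key y).differentiableAt.differentiableWithinAt
    · intro y _
      rw [(key y).deriv, sub_nonneg, div_le_div_iff₀ (by positivity) (by positivity)]
      nlinarith [sq_nonneg y, sq_nonneg (y ^ 2), sq_nonneg (y ^ 2 - 1)]
  have h0 : G 0 = 0 := by simp [hG]
  have := mono self_mem_Ici (show x ∈ Ici 0 from hx) hx
  rw [h0] at this
  simpa [hG, sub_nonneg] using this


lemma convexOn_inv_sqrt : ConvexOn ℝ (Ioi (0:ℝ)) (fun t : ℝ => (Real.sqrt t)⁻¹) := by
  have himg : Real.sqrt '' (Ioi (0:ℝ)) = Ioi 0 := by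
    ext y
    constructor
    · rintro ⟨x, hx, rfl⟩; exact Real.sqrt_pos.2 hx
    · intro hy
      exact ⟨y ^ 2, (pow_pos hy 2 : (0:ℝ) < y ^ 2), by rw [Real.sqrt_sq (le_of_lt hy)]⟩
  have hg : ConvexOn ℝ (Real.sqrt '' (Ioi (0:ℝ))) (fun x : ℝ => x⁻¹) := by
    rw [himg]
    have := convexOn_zpow (𝕜 := ℝ) (-1)
    simpa [zpow_neg, zpow_one] using this
  have hf : ConcaveOn ℝ (Ioi (0:ℝ)) Real.sqrt :=
    (strictConcaveOn_sqrt.concaveOn).subset (Ioi_subset_Ici le_rfl) (convex_Ioi 0)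
  have hanti : AntitoneOn (fun x : ℝ => x⁻¹) (Real.sqrt '' (Ioi (0:ℝ))) := by
    rw [himg]
    intro x hx y _ hxy
    exact inv_anti₀ hx hxy
  exact hg.comp_concaveOn hf hanti

lemma convexOn_inv_shift (c : ℝ) (hc : 0 < c) :
    ConvexOn ℝ (Ioi (0:ℝ)) (fun t : ℝ => (c + t)⁻¹) := by
  have h := convexOn_zpow (𝕜 := ℝ) (-1)
  refine ⟨convex_Ioi 0, fun x hx y hy p q hp hq hpq => ?_⟩
  have hx' : c + x ∈ Ioi (0:ℝ) := add_pos hc hx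
  have hy' : c + y ∈ Ioi (0:ℝ) := add_pos hc hy
  have h2 := h.2 hx' hy' hp hq hpq
  simp only [smul_eq_mul, zpow_neg, zpow_one] at h2 ⊢
  have hcomb : p * (c + x) + q * (c + y) = c + (p * x + q * y) := by
    linear_combination c * hpq
  rw [hcomb] at h2
  exact h2

lemma convexOn_h (c : ℝ) (hc : 0 < c) :
    ConvexOn ℝ (Ioi (0:ℝ))
      (fun t : ℝ => Real.sqrt c * ((Real.sqrt t)⁻¹ * (c + t)⁻¹)) := by
  have hanti1 : AntitoneOn (fun t : ℝ => (Real.sqrt t)⁻¹) (Ioi (0:ℝ)) := by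
    intro x hx y hy hxy
    exact inv_anti₀ (Real.sqrt_pos.2 hx) (Real.sqrt_le_sqrt hxy)
  have hanti2 : AntitoneOn (fun t : ℝ => (c + t)⁻¹) (Ioi (0:ℝ)) := by
    intro x hx y hy hxy
    exact inv_anti₀ (add_pos hc hx) (by linarith)
  have hprod : ConvexOn ℝ (Ioi (0:ℝ))
      (fun t : ℝ => (Real.sqrt t)⁻¹ * (c + t)⁻¹) :=
    convexOn_inv_sqrt.mul (convexOn_inv_shift c hc)
      (fun x _ => inv_nonneg.2 (Real.sqrt_nonneg x)) (fun x hx => inv_nonneg.2 (add_pos hc hx).le)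
      (hanti1.monovaryOn hanti2)
  refine ⟨convex_Ioi 0, fun x hx y hy p q hp hq hpq => ?_⟩
  have h2 := hprod.2 hx hy hp hq hpq
  simp only [smul_eq_mul] at h2 ⊢
  have := mul_le_mul_of_nonneg_left h2 (Real.sqrt_nonneg c)
  nlinarith [Real.sqrt_nonneg c]


lemma midpoint_le_integral (f : ℝ → ℝ) (a : ℝ)
    (hf : ConvexOn ℝ (Icc a (a + 1)) f) (hc : ContinuousOn f (Icc a (a + 1))) :
    f (a + 1 / 2) ≤ ∫ t in a..(a + 1), f t := by
  have hab : a ≤ a + 1 := by linarith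
  set μ : Measure ℝ := volume.restrict (Icc a (a + 1)) with hμ
  have huniv : μ univ = 1 := by
    rw [hμ, Measure.restrict_apply_univ, Real.volume_Icc]
    norm_num
  haveI : IsFiniteMeasure μ := ⟨by rw [huniv]; exact ENNReal.one_lt_top⟩
  haveI : NeZero μ := ⟨by
    intro h0
    rw [h0] at huniv
    simp at huniv⟩
  have hid : Integrable (fun x : ℝ => x) μ :=
    continuous_id.continuousOn.integrableOn_Icc
  have hfi : Integrable f μ := hc.integrableOn_Icc
  have hmem : ∀ᵐ x ∂μ, x ∈ Icc a (a + 1) := ae_restrict_mem measurableSet_Icc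
  have key := hf.map_average_le hc isClosed_Icc hmem hid
    (by exact hfi)
  have hIcc : ∀ g : ℝ → ℝ, ⨍ x, g x ∂μ = ∫ t in a..(a + 1), g t := by
    intro g
    rw [average_eq, measureReal_def, huniv, hμ, MeasureTheory.integral_Icc_eq_integral_Ioc,
      ← intervalIntegral.integral_of_le hab]
    simp
  have havg : ⨍ x, x ∂μ = a + 1 / 2 := by
    rw [hIcc (fun x => x), integral_id]
    ring
  rw [havg] at key
  calc f (a + 1 / 2) ≤ ⨍ x, f x ∂μ := key
    _ = _ := hIcc f

lemma integral_h (c : ℝ) (hc : 0 < c) (a : ℝ) (ha : 0 < a) :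
    ∫ t in a..(a + 1), Real.sqrt c * ((Real.sqrt t)⁻¹ * (c + t)⁻¹)
      = 2 * Real.arctan (Real.sqrt (a + 1) / Real.sqrt c)
        - 2 * Real.arctan (Real.sqrt a / Real.sqrt c) := by
  have hab : a ≤ a + 1 := by linarith
  have hcs : 0 < Real.sqrt c := Real.sqrt_pos.2 hc
  have hderiv : ∀ t ∈ uIcc a (a + 1),
      HasDerivAt (fun t => 2 * Real.arctan (Real.sqrt t / Real.sqrt c))
        (Real.sqrt c * ((Real.sqrt t)⁻¹ * (c + t)⁻¹)) t := by
    intro t ht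
    rw [uIcc_of_le hab] at ht
    have ht0 : 0 < t := lt_of_lt_of_le ha ht.1
    have hts : 0 < Real.sqrt t := Real.sqrt_pos.2 ht0
    have h1 : HasDerivAt (fun t => Real.sqrt t / Real.sqrt c)
        (1 / (2 * Real.sqrt t) / Real.sqrt c) t :=
      (Real.hasDerivAt_sqrt ht0.ne').div_const _
    have h2 := (Real.hasDerivAt_arctan (Real.sqrt t / Real.sqrt c)).comp t h1
    have h3 := h2.const_mul 2
    refine h3.congr_deriv (Eq.symm ?_)
    have hsq : Real.sqrt t ^ 2 = t := Real.sq_sqrt ht0.le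
    have hsqc : Real.sqrt c ^ 2 = c := Real.sq_sqrt hc.le
    have hden : 1 + (Real.sqrt t / Real.sqrt c) ^ 2 = (c + t) / c := by
      rw [div_pow, hsq, hsqc]
      field_simp
    rw [hden]
    have hct : (0:ℝ) < c + t := by linarith
    field_simp
    linear_combination hsqc
  have hcont : ContinuousOn (fun t => Real.sqrt c * ((Real.sqrt t)⁻¹ * (c + t)⁻¹))
      (uIcc a (a + 1)) := by
    rw [uIcc_of_le hab]
    refine continuousOn_const.mul (ContinuousOn.mul ?_ ?_)
    · exact Real.continuous_sqrt.continuousOn.inv₀ fun t ht =>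
        (Real.sqrt_pos.2 (lt_of_lt_of_le ha ht.1)).ne'
    · exact (continuous_const.add continuous_id).continuousOn.inv₀ fun t ht =>
        (by nlinarith [ht.1] : (0:ℝ) < c + t).ne'
  have := intervalIntegral.integral_eq_sub_of_hasDerivAt hderiv
    (hcont.intervalIntegrable)
  rw [this]



lemma row_sum_le (c : ℝ) (hc : 0 < c) (N : ℕ) :
    ∑ m ∈ Finset.range N,
      Real.sqrt c * ((Real.sqrt ((m : ℝ) + 1 / 2))⁻¹ * (c + ((m : ℝ) + 1 / 2))⁻¹)
      ≤ Real.pi := by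
  have hcs : 0 < Real.sqrt c := Real.sqrt_pos.2 hc
  have hsqc : Real.sqrt c ^ 2 = c := Real.sq_sqrt hc.le
  set φ : ℕ → ℝ := fun j => 2 * Real.arctan (Real.sqrt ((j : ℝ) + 1) / Real.sqrt c)
    with hφ
  have hφle : ∀ j, φ j ≤ Real.pi := by
    intro j
    have := Real.arctan_lt_pi_div_two (Real.sqrt ((j : ℝ) + 1) / Real.sqrt c)
    simp only [hφ]
    linarith
  have hφ0 : 0 ≤ φ 0 := by
    simp only [hφ]
    have : 0 ≤ Real.arctan (Real.sqrt ((0:ℕ) + (1:ℝ)) / Real.sqrt c) := by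
      rw [← Real.arctan_zero]
      exact Real.arctan_strictMono.monotone (by positivity)
    linarith
  cases N with
  | zero => simp [Real.pi_pos.le]
  | succ K =>
    rw [Finset.sum_range_succ']
    -- first term bound (m = 0)
    have hfirst : Real.sqrt c * ((Real.sqrt (((0:ℕ) : ℝ) + 1 / 2))⁻¹
        * (c + (((0:ℕ) : ℝ) + 1 / 2))⁻¹) ≤ φ 0 := by
      push_cast
      have hx : (0:ℝ) ≤ (Real.sqrt c)⁻¹ := by positivity
      have harc := arctan_lower hx
      have hxsq : ((Real.sqrt c)⁻¹) ^ 2 = c⁻¹ := by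
        rw [inv_pow, hsqc]
      have heq : Real.sqrt c * ((Real.sqrt ((0:ℝ) + 1 / 2))⁻¹ * (c + ((0:ℝ) + 1 / 2))⁻¹)
          = 2 * (Real.sqrt 2 * (Real.sqrt c)⁻¹ / (2 + ((Real.sqrt c)⁻¹) ^ 2)) := by
        rw [hxsq]
        have h12 : Real.sqrt ((0:ℝ) + 1 / 2) = (Real.sqrt 2)⁻¹ := by
          rw [show (0:ℝ) + 1 / 2 = 2⁻¹ by norm_num, Real.sqrt_inv]
        rw [h12, inv_inv]
        have hs2 : Real.sqrt 2 ^ 2 = 2 := Real.sq_sqrt (by norm_num)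
        field_simp
        ring_nf
        linear_combination (1 + 2 * c) * hsqc
      rw [heq]
      have hφ0eq : φ 0 = 2 * Real.arctan ((Real.sqrt c)⁻¹) := by
        simp [hφ, Real.sqrt_one, one_div]
      rw [hφ0eq]
      linarith
    -- telescoping part
    have hstep : ∀ i ∈ Finset.range K,
        Real.sqrt c * ((Real.sqrt (((i+1:ℕ) : ℝ) + 1 / 2))⁻¹
          * (c + (((i+1:ℕ) : ℝ) + 1 / 2))⁻¹) ≤ φ (i + 1) - φ i := by
      intro i _
      set a : ℝ := (i : ℝ) + 1 with haa
      have ha : 0 < a := by positivity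
      have hsub : Icc a (a + 1) ⊆ Ioi (0:ℝ) := fun x hx => lt_of_lt_of_le ha hx.1
      have hconv := (convexOn_h c hc).subset hsub (convex_Icc _ _)
      have hcont : ContinuousOn
          (fun t : ℝ => Real.sqrt c * ((Real.sqrt t)⁻¹ * (c + t)⁻¹)) (Icc a (a + 1)) := by
        refine continuousOn_const.mul (ContinuousOn.mul ?_ ?_)
        · exact Real.continuous_sqrt.continuousOn.inv₀ fun t ht =>
            (Real.sqrt_pos.2 (lt_of_lt_of_le ha ht.1)).ne'
        · exact (continuous_const.add continuous_id).continuousOn.inv₀ fun t ht =>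
            (by nlinarith [ht.1] : (0:ℝ) < c + t).ne'
      have hmid := midpoint_le_integral _ a hconv hcont
      rw [integral_h c hc a ha] at hmid
      have hcast : (((i+1:ℕ) : ℝ) + 1 / 2) = a + 1 / 2 := by push_cast; ring
      have hφi1 : φ (i + 1) = 2 * Real.arctan (Real.sqrt (a + 1) / Real.sqrt c) := by
        simp only [hφ, haa]; push_cast; try ring_nf
      have hφi : φ i = 2 * Real.arctan (Real.sqrt a / Real.sqrt c) := by
        simp only [hφ, haa]
      rw [hcast, hφi1, hφi]
      exact hmid
    calc ∑ i ∈ Finset.range K, Real.sqrt c * ((Real.sqrt (((i+1:ℕ) : ℝ) + 1 / 2))⁻¹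
          * (c + (((i+1:ℕ) : ℝ) + 1 / 2))⁻¹)
        + Real.sqrt c * ((Real.sqrt (((0:ℕ) : ℝ) + 1 / 2))⁻¹ * (c + (((0:ℕ) : ℝ) + 1 / 2))⁻¹)
        ≤ ∑ i ∈ Finset.range K, (φ (i + 1) - φ i) + φ 0 := by
          exact add_le_add (Finset.sum_le_sum hstep) hfirst
      _ = φ K := by rw [Finset.sum_range_sub φ]; ring
      _ ≤ Real.pi := hφle K


noncomputable def Kk (n m : ℕ) : ℝ :=
  Real.sqrt ((n : ℝ) + 1 / 2) * ((Real.sqrt ((m : ℝ) + 1 / 2))⁻¹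
    * (((n : ℝ) + 1 / 2) + ((m : ℝ) + 1 / 2))⁻¹)

lemma Kk_nonneg (n m : ℕ) : 0 ≤ Kk n m := by
  unfold Kk
  positivity


lemma Kk_row_summable (n : ℕ) : Summable (fun m => Kk n m) :=
  summable_of_sum_range_le (fun m => Kk_nonneg n m)
    (fun N => row_sum_le ((n : ℝ) + 1 / 2) (by positivity) N)

lemma Kk_row_tsum_le (n : ℕ) : ∑' m, Kk n m ≤ Real.pi :=
  Real.tsum_le_of_sum_range_le (fun m => Kk_nonneg n m)
    (fun N => row_sum_le ((n : ℝ) + 1 / 2) (by positivity) N)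

lemma amgm (n m : ℕ) (x y : ℝ) (hx : 0 ≤ x) (hy : 0 ≤ y) :
    x * y * (((n : ℝ) + (m : ℝ) + 1))⁻¹
      ≤ (x ^ 2 * Kk n m + y ^ 2 * Kk m n) / 2 := by
  have hd : (0:ℝ) < (n : ℝ) + (m : ℝ) + 1 := by positivity
  have hkk : Kk n m * Kk m n = (((n : ℝ) + (m : ℝ) + 1)⁻¹) ^ 2 := by
    unfold Kk
    have h1 : (0:ℝ) < Real.sqrt ((n : ℝ) + 1 / 2) := Real.sqrt_pos.2 (by positivity)
    have h2 : (0:ℝ) < Real.sqrt ((m : ℝ) + 1 / 2) := Real.sqrt_pos.2 (by positivity)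
    have e1 : ((n : ℝ) + 1 / 2) + ((m : ℝ) + 1 / 2) = (n : ℝ) + (m : ℝ) + 1 := by ring
    have e2 : ((m : ℝ) + 1 / 2) + ((n : ℝ) + 1 / 2) = (n : ℝ) + (m : ℝ) + 1 := by ring
    rw [e1, e2]
    field_simp
  have h1 : Real.sqrt (Kk n m) ^ 2 = Kk n m := Real.sq_sqrt (Kk_nonneg n m)
  have h2 : Real.sqrt (Kk m n) ^ 2 = Kk m n := Real.sq_sqrt (Kk_nonneg m n)
  have h3 : Real.sqrt (Kk n m) * Real.sqrt (Kk m n) = ((n : ℝ) + (m : ℝ) + 1)⁻¹ := by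
    rw [← Real.sqrt_mul (Kk_nonneg n m), hkk]
    exact Real.sqrt_sq (by positivity)
  nlinarith [sq_nonneg (x * Real.sqrt (Kk n m) - y * Real.sqrt (Kk m n)),
    mul_nonneg hx hy, sq_nonneg (x * Real.sqrt (Kk n m) + y * Real.sqrt (Kk m n))]

end WidomAux

/-- Widom (b) ⇒ (a): if the moments `c_j = ∫₀¹ x^j dμ` satisfy `c_n ≤ β/(n+1)`,
then for every square-summable complex sequence `a`,
`|∑_{n,m} c_{n+m} conj(a_n) a_m| ≤ β π ∑ |a_n|²`. -/
theorem widom_b_implies_a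
    (μ : Measure ℝ) [IsFiniteMeasure μ] (hsupp : μ (Icc (0:ℝ) 1)ᶜ = 0)
    (β : ℝ) (hβ : 0 < β)
    (hmom : ∀ n : ℕ, (∫ x in Icc (0:ℝ) 1, x ^ n ∂μ) ≤ β / (n + 1))
    (a : ℕ → ℂ) (ha : Summable fun n => ‖a n‖ ^ 2) :
    ‖∑' p : ℕ × ℕ,
        ((∫ x in Icc (0:ℝ) 1, x ^ (p.1 + p.2) ∂μ : ℝ) : ℂ) * conj (a p.1) * a p.2‖
      ≤ β * Real.pi * ∑' n : ℕ, ‖a n‖ ^ 2 := by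
  set c : ℕ → ℝ := fun j => ∫ x in Icc (0:ℝ) 1, x ^ j ∂μ with hc
  have hc0 : ∀ j, 0 ≤ c j := fun j =>
    setIntegral_nonneg measurableSet_Icc (fun x hx => pow_nonneg hx.1 j)
  -- the dominating kernel
  set u : ℕ × ℕ → ℝ := fun p => ‖a p.1‖ ^ 2 * Kk p.1 p.2 with hu
  have hu_nonneg : ∀ p, 0 ≤ u p := fun p =>
    mul_nonneg (sq_nonneg _) (Kk_nonneg _ _)
  have hu_row : ∀ n, Summable (fun m => u (n, m)) := by
    intro n
    exact (Kk_row_summable n).mul_left (‖a n‖ ^ 2)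
  have hu_row_tsum_le : ∀ n, ∑' m, u (n, m) ≤ ‖a n‖ ^ 2 * Real.pi := by
    intro n
    rw [hu]
    simp only
    rw [tsum_mul_left]
    exact mul_le_mul_of_nonneg_left (Kk_row_tsum_le n) (sq_nonneg _)
  have hu_sum : Summable u := by
    apply (summable_prod_of_nonneg hu_nonneg).2
    refine ⟨hu_row, ?_⟩
    apply Summable.of_nonneg_of_le (fun n => tsum_nonneg (fun m => hu_nonneg (n, m)))
      hu_row_tsum_le
    exact ha.mul_right Real.pi
  have hu_tsum_le : ∑' p, u p ≤ Real.pi * ∑' n, ‖a n‖ ^ 2 := by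
    rw [Summable.tsum_prod' hu_sum hu_row]
    calc ∑' n, ∑' m, u (n, m) ≤ ∑' n, ‖a n‖ ^ 2 * Real.pi := by
          apply Summable.tsum_le_tsum hu_row_tsum_le
          · exact (summable_prod_of_nonneg hu_nonneg).1 hu_sum |>.2
          · exact ha.mul_right Real.pi
      _ = Real.pi * ∑' n, ‖a n‖ ^ 2 := by rw [tsum_mul_right, mul_comm]
  -- the swapped kernel
  have hswap_sum : Summable (fun p : ℕ × ℕ => u p.swap) := hu_sum.prod_symm
  have hswap_tsum : ∑' p : ℕ × ℕ, u p.swap = ∑' p, u p := by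
    exact (Equiv.prodComm ℕ ℕ).tsum_eq u
  -- pointwise norm bound
  set F : ℕ × ℕ → ℂ := fun p => ((c (p.1 + p.2) : ℝ) : ℂ) * conj (a p.1) * a p.2 with hF
  have hnorm : ∀ p : ℕ × ℕ, ‖F p‖ = c (p.1 + p.2) * ‖a p.1‖ * ‖a p.2‖ := by
    intro p
    rw [hF]
    simp only [norm_mul, Complex.norm_real, RCLike.norm_conj, Real.norm_eq_abs,
      abs_of_nonneg (hc0 _)]
  have hFle : ∀ p : ℕ × ℕ, ‖F p‖ ≤ β / 2 * (u p + u p.swap) := by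
    rintro ⟨n, m⟩
    rw [hnorm]
    simp only
    have h1 : c (n + m) ≤ β * (((n : ℝ) + (m : ℝ) + 1))⁻¹ := by
      have := hmom (n + m)
      rw [div_eq_mul_inv] at this
      calc c (n + m) ≤ β * ((((n + m : ℕ) : ℝ)) + 1)⁻¹ := this
        _ = β * (((n : ℝ) + (m : ℝ) + 1))⁻¹ := by push_cast; ring
    have h2 : ‖a n‖ * ‖a m‖ * (((n : ℝ) + (m : ℝ) + 1))⁻¹
        ≤ (‖a n‖ ^ 2 * Kk n m + ‖a m‖ ^ 2 * Kk m n) / 2 :=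
      amgm n m _ _ (norm_nonneg _) (norm_nonneg _)
    have hb : 0 ≤ ‖a n‖ * ‖a m‖ := mul_nonneg (norm_nonneg _) (norm_nonneg _)
    have hd : (0:ℝ) ≤ (((n : ℝ) + (m : ℝ) + 1))⁻¹ := by positivity
    calc c (n + m) * ‖a n‖ * ‖a m‖
        ≤ (β * (((n : ℝ) + (m : ℝ) + 1))⁻¹) * ‖a n‖ * ‖a m‖ := by
          apply mul_le_mul_of_nonneg_right (mul_le_mul_of_nonneg_right h1 (norm_nonneg _))
            (norm_nonneg _)
      _ = β * (‖a n‖ * ‖a m‖ * (((n : ℝ) + (m : ℝ) + 1))⁻¹) := by ring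
      _ ≤ β * ((‖a n‖ ^ 2 * Kk n m + ‖a m‖ ^ 2 * Kk m n) / 2) :=
          mul_le_mul_of_nonneg_left h2 hβ.le
      _ = β / 2 * (u (n, m) + u ((n, m) : ℕ × ℕ).swap) := by
          rw [hu]; simp only [Prod.swap]; ring
  have hg_sum : Summable (fun p : ℕ × ℕ => β / 2 * (u p + u p.swap)) :=
    (hu_sum.add hswap_sum).mul_left _
  have hF_norm_sum : Summable (fun p => ‖F p‖) :=
    Summable.of_nonneg_of_le (fun p => norm_nonneg _) hFle hg_sum
  calc ‖∑' p : ℕ × ℕ, F p‖ ≤ ∑' p, ‖F p‖ := norm_tsum_le_tsum_norm hF_norm_sum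
    _ ≤ ∑' p : ℕ × ℕ, β / 2 * (u p + u p.swap) := Summable.tsum_le_tsum hFle hF_norm_sum hg_sum
    _ = β / 2 * (∑' p, u p + ∑' p : ℕ × ℕ, u p.swap) := by
        rw [tsum_mul_left, Summable.tsum_add hu_sum hswap_sum]
    _ = β * ∑' p, u p := by rw [hswap_tsum]; ring
    _ ≤ β * (Real.pi * ∑' n, ‖a n‖ ^ 2) :=
        mul_le_mul_of_nonneg_left hu_tsum_le hβ.le
    _ = β * Real.pi * ∑' n, ‖a n‖ ^ 2 := by ring
end

section
/- Let $\mu$ be a positive Borel measure on $\mathbb{R}_+ = (0,\infty)$ such that the measure $d\rho(\lambda) = d\mu(\lambda)/(1+\lambda^2)$ is finite and satisfies $\rho((0,\varepsilon]) \le \beta\varepsilon$ and $\rho([t,\infty)) \le \gamma/t$ for all $\varepsilon, t > 0$, for some constants $\beta, \gamma > 0$. Then the function $h(p) := \frac{1}{\pi}\int_{\mathbb{R}_+} \frac{p}{\lambda^2 + p^2}\, d\mu(\lambda)$, defined for $p > 0$, is bounded: for all $p > 0$, $|h(p)| \le \frac{1}{\pi}\rho(\mathbb{R}_+) + \frac{1}{2}\max\{\beta,\gamma\}$.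 -/
open MeasureTheory Set Filter Real Topology

lemma schober_arctan_deriv (p : ℝ) (hp : 0 < p) (x : ℝ) :
    HasDerivAt (fun y : ℝ => Real.arctan (y / p)) (p / (x ^ 2 + p ^ 2)) x := by
  have h := (Real.hasDerivAt_arctan (x / p)).comp x ((hasDerivAt_id x).div_const p)
  refine h.congr_deriv ?_
  have h1 : 1 + (x / p) ^ 2 ≠ 0 := by positivity
  field_simp
  ring

lemma schober_rat_deriv (p : ℝ) (hp : 0 < p) (x : ℝ) :
    HasDerivAt (fun y : ℝ => y / (y ^ 2 + p ^ 2)) ((p ^ 2 - x ^ 2) / (x ^ 2 + p ^ 2) ^ 2) x := by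
  have hd : x ^ 2 + p ^ 2 ≠ 0 := by positivity
  have h := (hasDerivAt_id x).div ((hasDerivAt_pow 2 x).add_const (p ^ 2)) hd
  refine h.congr_deriv ?_
  simp only [id]
  field_simp
  ring

lemma schober_F_deriv (p : ℝ) (hp : 0 < p) (x : ℝ) :
    HasDerivAt (fun l : ℝ => (p - 1) * (l ^ 2 - p) / (l ^ 2 + p ^ 2))
      (2 * p * (p ^ 2 - 1) * x / (x ^ 2 + p ^ 2) ^ 2) x := by
  have hd : x ^ 2 + p ^ 2 ≠ 0 := by positivity
  have h := (((hasDerivAt_pow 2 x).sub_const p).const_mul (p - 1)).div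
    ((hasDerivAt_pow 2 x).add_const (p ^ 2)) hd
  refine h.congr_deriv ?_
  field_simp
  ring

lemma schober_tendsto_rat (p : ℝ) (hp : 0 < p) :
    Tendsto (fun x : ℝ => x / (x ^ 2 + p ^ 2)) atTop (𝓝 0) := by
  apply squeeze_zero' (g := fun x : ℝ => x⁻¹)
  · filter_upwards [eventually_gt_atTop 0] with x hx; positivity
  · filter_upwards [eventually_ge_atTop 1] with x hx
    have hx0 : (0:ℝ) < x := by linarith
    rw [div_le_iff₀ (by positivity), inv_mul_eq_div, le_div_iff₀ hx0]
    nlinarith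
  · exact tendsto_inv_atTop_zero

lemma schober_tendsto_arctan (p : ℝ) (hp : 0 < p) :
    Tendsto (fun x : ℝ => Real.arctan (x / p)) atTop (𝓝 (π / 2)) :=
  (tendsto_nhds_of_tendsto_nhdsWithin Real.tendsto_arctan_atTop).comp
    (Tendsto.atTop_div_const hp tendsto_id)

/-- The main tail estimate, case `p ≥ 1`. -/
lemma schober_case_ge (μ : Measure ℝ) (β γ : ℝ) (hβ : 0 < β) (hγ : 0 < γ)
    (ρ : Measure ℝ) [IsFiniteMeasure ρ]
    (hae : ∀ᵐ l ∂ρ, 0 < l)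
    (hρ2 : ∀ x : ℝ, 0 < x → ρ (Ici x) ≤ ENNReal.ofReal (γ / x))
    (p : ℝ) (hp : 0 < p) (h1p : 1 ≤ p) :
    ∫⁻ l, ENNReal.ofReal ((p - 1) * (l ^ 2 - p) / (l ^ 2 + p ^ 2)) ∂ρ
      ≤ ENNReal.ofReal (Real.pi * max β γ / 2) := by
  set s := Real.sqrt p with hs_def
  have hs2 : s ^ 2 = p := Real.sq_sqrt hp.le
  have hs0 : 0 < s := Real.sqrt_pos.mpr hp
  have hc : 0 ≤ 2 * p * (p ^ 2 - 1) := by nlinarith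
  have hφc : Continuous fun x : ℝ => 2 * p * (p ^ 2 - 1) * x / (x ^ 2 + p ^ 2) ^ 2 := by
    apply Continuous.div (by continuity) (by continuity)
    intro x; positivity
  have hφm : Measurable fun x : ℝ => ENNReal.ofReal (2 * p * (p ^ 2 - 1) * x / (x ^ 2 + p ^ 2) ^ 2) :=
    hφc.measurable.ennreal_ofReal
  -- FTC: for 0 < l, ofReal (F l) equals an integral over Ioc s l
  have key : ∀ l : ℝ, 0 < l → ENNReal.ofReal ((p - 1) * (l ^ 2 - p) / (l ^ 2 + p ^ 2))
      = ∫⁻ x in Ioc s l, ENNReal.ofReal (2 * p * (p ^ 2 - 1) * x / (x ^ 2 + p ^ 2) ^ 2) := by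
    intro l hl
    rcases le_or_gt l s with hls | hsl
    · rw [Ioc_eq_empty (not_lt.mpr hls), Measure.restrict_empty, lintegral_zero_measure]
      rw [ENNReal.ofReal_eq_zero]
      have hl2 : l ^ 2 ≤ p := by rw [← hs2]; nlinarith
      apply div_nonpos_of_nonpos_of_nonneg
      · exact mul_nonpos_of_nonneg_of_nonpos (by linarith) (by linarith)
      · positivity
    · have hFTC : ∫ x in s..l, 2 * p * (p ^ 2 - 1) * x / (x ^ 2 + p ^ 2) ^ 2
          = (p - 1) * (l ^ 2 - p) / (l ^ 2 + p ^ 2) - (p - 1) * (s ^ 2 - p) / (s ^ 2 + p ^ 2) :=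
        intervalIntegral.integral_eq_sub_of_hasDerivAt (fun x _ => schober_F_deriv p hp x)
          (hφc.intervalIntegrable s l)
      rw [intervalIntegral.integral_of_le hsl.le] at hFTC
      have hnn : 0 ≤ᵐ[volume.restrict (Ioc s l)]
          fun x => 2 * p * (p ^ 2 - 1) * x / (x ^ 2 + p ^ 2) ^ 2 := by
        filter_upwards [ae_restrict_mem measurableSet_Ioc] with x hx
        have hx0 : 0 < x := hs0.trans hx.1
        apply div_nonneg (by nlinarith) (by positivity)
      rw [← ofReal_integral_eq_lintegral_ofReal (hφc.integrableOn_Ioc) hnn, hFTC, hs2]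
      norm_num
  -- the product kernel
  have hT : MeasurableSet {q : ℝ × ℝ | s < q.2 ∧ q.2 ≤ q.1} :=
    (measurable_snd measurableSet_Ioi).inter (measurableSet_le measurable_snd measurable_fst)
  calc ∫⁻ l, ENNReal.ofReal ((p - 1) * (l ^ 2 - p) / (l ^ 2 + p ^ 2)) ∂ρ
      = ∫⁻ l, ∫⁻ x, Set.indicator {q : ℝ × ℝ | s < q.2 ∧ q.2 ≤ q.1}
          (fun q => ENNReal.ofReal (2 * p * (p ^ 2 - 1) * q.2 / (q.2 ^ 2 + p ^ 2) ^ 2)) (l, x) ∂volume ∂ρ := by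
        apply lintegral_congr_ae
        filter_upwards [hae] with l hl
        rw [key l hl, ← lintegral_indicator measurableSet_Ioc]
        congr 1
    _ = ∫⁻ x, ∫⁻ l, Set.indicator {q : ℝ × ℝ | s < q.2 ∧ q.2 ≤ q.1}
          (fun q => ENNReal.ofReal (2 * p * (p ^ 2 - 1) * q.2 / (q.2 ^ 2 + p ^ 2) ^ 2)) (l, x) ∂ρ ∂volume := by
        apply lintegral_lintegral_swap
        exact ((hφm.comp measurable_snd).indicator hT).aemeasurable
    _ ≤ ∫⁻ x, Set.indicator (Ioi (0:ℝ))
          (fun x => ENNReal.ofReal (γ * (2 * p * (p ^ 2 - 1)) / (x ^ 2 + p ^ 2) ^ 2)) x ∂volume := by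
        apply lintegral_mono
        intro x
        dsimp only
        by_cases hx : s < x
        · have hx0 : 0 < x := hs0.trans hx
          have hslice : (fun l => Set.indicator {q : ℝ × ℝ | s < q.2 ∧ q.2 ≤ q.1}
              (fun q => ENNReal.ofReal (2 * p * (p ^ 2 - 1) * q.2 / (q.2 ^ 2 + p ^ 2) ^ 2)) (l, x))
              = Set.indicator (Ici x) (fun _ => ENNReal.ofReal (2 * p * (p ^ 2 - 1) * x / (x ^ 2 + p ^ 2) ^ 2)) := by
            funext l
            simp only [Set.indicator_apply, Set.mem_setOf_eq, Set.mem_Ici, hx, true_and]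
          rw [hslice, lintegral_indicator_const measurableSet_Ici,
            Set.indicator_of_mem (Set.mem_Ioi.mpr hx0)]
          have hφ0 : 0 ≤ 2 * p * (p ^ 2 - 1) * x / (x ^ 2 + p ^ 2) ^ 2 :=
            div_nonneg (by nlinarith) (by positivity)
          calc ENNReal.ofReal (2 * p * (p ^ 2 - 1) * x / (x ^ 2 + p ^ 2) ^ 2) * ρ (Ici x)
              ≤ ENNReal.ofReal (2 * p * (p ^ 2 - 1) * x / (x ^ 2 + p ^ 2) ^ 2) * ENNReal.ofReal (γ / x) :=
                mul_le_mul_right (hρ2 x hx0) _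
            _ = ENNReal.ofReal ((2 * p * (p ^ 2 - 1) * x / (x ^ 2 + p ^ 2) ^ 2) * (γ / x)) :=
                (ENNReal.ofReal_mul hφ0).symm
            _ = ENNReal.ofReal (γ * (2 * p * (p ^ 2 - 1)) / (x ^ 2 + p ^ 2) ^ 2) := by
                congr 1
                field_simp
        · have hz : (fun l => Set.indicator {q : ℝ × ℝ | s < q.2 ∧ q.2 ≤ q.1}
              (fun q => ENNReal.ofReal (2 * p * (p ^ 2 - 1) * q.2 / (q.2 ^ 2 + p ^ 2) ^ 2)) (l, x))
              = fun _ => (0 : ENNReal) := by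
            funext l
            simp only [Set.indicator_apply, Set.mem_setOf_eq]
            rw [if_neg (fun h => hx h.1)]
          rw [hz]
          simp
    _ = ∫⁻ x in Ioi (0:ℝ), ENNReal.ofReal (γ * (2 * p * (p ^ 2 - 1)) / (x ^ 2 + p ^ 2) ^ 2) ∂volume := by
        rw [lintegral_indicator measurableSet_Ioi]
    _ ≤ ENNReal.ofReal (Real.pi * max β γ / 2) := by
        -- explicit antiderivative
        set D := γ * (2 * p * (p ^ 2 - 1)) with hD_def
        have hD : 0 ≤ D := by positivity
        have hAd : ∀ x : ℝ, HasDerivAt (fun x : ℝ =>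
            D / (2 * p ^ 2) * (x / (x ^ 2 + p ^ 2)) + D / (2 * p ^ 3) * Real.arctan (x / p))
            (D / (x ^ 2 + p ^ 2) ^ 2) x := by
          intro x
          have h := ((schober_rat_deriv p hp x).const_mul (D / (2 * p ^ 2))).add
            ((schober_arctan_deriv p hp x).const_mul (D / (2 * p ^ 3)))
          refine h.congr_deriv ?_
          have hd1 : x ^ 2 + p ^ 2 ≠ 0 := by positivity
          field_simp
          ring
        have hnn : ∀ x ∈ Ioi (0:ℝ), 0 ≤ D / (x ^ 2 + p ^ 2) ^ 2 := by
          intro x _; positivity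
        have hAt : Tendsto (fun x : ℝ =>
            D / (2 * p ^ 2) * (x / (x ^ 2 + p ^ 2)) + D / (2 * p ^ 3) * Real.arctan (x / p))
            atTop (𝓝 (D / (2 * p ^ 2) * 0 + D / (2 * p ^ 3) * (π / 2))) :=
          ((schober_tendsto_rat p hp).const_mul _).add ((schober_tendsto_arctan p hp).const_mul _)
        have hval : ∫ x in Ioi (0:ℝ), D / (x ^ 2 + p ^ 2) ^ 2
            = (D / (2 * p ^ 2) * 0 + D / (2 * p ^ 3) * (π / 2))
              - (D / (2 * p ^ 2) * ((0:ℝ) / (0 ^ 2 + p ^ 2)) + D / (2 * p ^ 3) * Real.arctan (0 / p)) :=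
          integral_Ioi_of_hasDerivAt_of_nonneg' (fun x _ => hAd x) hnn hAt
        have hint : IntegrableOn (fun x : ℝ => D / (x ^ 2 + p ^ 2) ^ 2) (Ioi (0:ℝ)) :=
          integrableOn_Ioi_deriv_of_nonneg' (fun x _ => hAd x) hnn hAt
        rw [← ofReal_integral_eq_lintegral_ofReal hint (ae_of_all _ (fun x => by positivity))]
        apply ENNReal.ofReal_le_ofReal
        rw [hval]
        simp only [zero_div, Real.arctan_zero, mul_zero, zero_add, zero_pow, mul_zero, add_zero]
        have hkey : D / (2 * p ^ 3) ≤ γ := by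
          rw [div_le_iff₀ (by positivity), hD_def]
          nlinarith
        have hπ : 0 < π / 2 := by positivity
        calc D / (2 * p ^ 3) * (π / 2) - 0 ≤ γ * (π / 2) := by
              nlinarith [mul_le_mul_of_nonneg_right hkey hπ.le]
          _ ≤ max β γ * (π / 2) := mul_le_mul_of_nonneg_right (le_max_right β γ) hπ.le
          _ = Real.pi * max β γ / 2 := by ring

set_option maxHeartbeats 1000000 in
/-- The main tail estimate, case `p ≤ 1`. -/
lemma schober_case_le (β γ : ℝ) (hβ : 0 < β) (hγ : 0 < γ)
    (ρ : Measure ℝ) [IsFiniteMeasure ρ]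
    (hae : ∀ᵐ l ∂ρ, 0 < l)
    (hρ1 : ∀ x : ℝ, 0 < x → ρ (Iio x) ≤ ENNReal.ofReal (β * x))
    (p : ℝ) (hp : 0 < p) (h1p : p ≤ 1) :
    ∫⁻ l, ENNReal.ofReal ((p - 1) * (l ^ 2 - p) / (l ^ 2 + p ^ 2)) ∂ρ
      ≤ ENNReal.ofReal (Real.pi * max β γ / 2) := by
  set s := Real.sqrt p with hs_def
  have hs2 : s ^ 2 = p := Real.sq_sqrt hp.le
  have hs0 : 0 < s := Real.sqrt_pos.mpr hp
  have hc : 0 ≤ 2 * p * (1 - p ^ 2) := by nlinarith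
  have hφc : Continuous fun x : ℝ => 2 * p * (1 - p ^ 2) * x / (x ^ 2 + p ^ 2) ^ 2 := by
    apply Continuous.div (by continuity) (by continuity)
    intro x; positivity
  have hφm : Measurable fun x : ℝ => ENNReal.ofReal (2 * p * (1 - p ^ 2) * x / (x ^ 2 + p ^ 2) ^ 2) :=
    hφc.measurable.ennreal_ofReal
  have hGd : ∀ x : ℝ, HasDerivAt (fun l : ℝ => -((p - 1) * (l ^ 2 - p) / (l ^ 2 + p ^ 2)))
      (2 * p * (1 - p ^ 2) * x / (x ^ 2 + p ^ 2) ^ 2) x := by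
    intro x
    have h := (schober_F_deriv p hp x).neg
    refine h.congr_deriv ?_
    ring
  have key : ∀ l : ℝ, 0 < l → ENNReal.ofReal ((p - 1) * (l ^ 2 - p) / (l ^ 2 + p ^ 2))
      = ∫⁻ x in Ioc l s, ENNReal.ofReal (2 * p * (1 - p ^ 2) * x / (x ^ 2 + p ^ 2) ^ 2) := by
    intro l hl
    rcases le_or_gt s l with hls | hsl
    · rw [Ioc_eq_empty (not_lt.mpr hls), Measure.restrict_empty, lintegral_zero_measure]
      rw [ENNReal.ofReal_eq_zero]
      have hl2 : p ≤ l ^ 2 := by rw [← hs2]; nlinarith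
      apply div_nonpos_of_nonpos_of_nonneg
      · exact mul_nonpos_of_nonpos_of_nonneg (by linarith) (by linarith)
      · positivity
    · have hFTC : ∫ x in l..s, 2 * p * (1 - p ^ 2) * x / (x ^ 2 + p ^ 2) ^ 2
          = -((p - 1) * (s ^ 2 - p) / (s ^ 2 + p ^ 2)) - -((p - 1) * (l ^ 2 - p) / (l ^ 2 + p ^ 2)) :=
        intervalIntegral.integral_eq_sub_of_hasDerivAt (fun x _ => hGd x)
          (hφc.intervalIntegrable l s)
      rw [intervalIntegral.integral_of_le hsl.le] at hFTC
      have hnn : 0 ≤ᵐ[volume.restrict (Ioc l s)]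
          fun x => 2 * p * (1 - p ^ 2) * x / (x ^ 2 + p ^ 2) ^ 2 := by
        filter_upwards [ae_restrict_mem measurableSet_Ioc] with x hx
        have hx0 : 0 < x := hl.trans hx.1
        apply div_nonneg (by nlinarith) (by positivity)
      rw [← ofReal_integral_eq_lintegral_ofReal (hφc.integrableOn_Ioc) hnn, hFTC, hs2]
      norm_num
  have hT : MeasurableSet {q : ℝ × ℝ | q.1 < q.2 ∧ q.2 ≤ s} :=
    (measurableSet_lt measurable_fst measurable_snd).inter (measurable_snd measurableSet_Iic)
  calc ∫⁻ l, ENNReal.ofReal ((p - 1) * (l ^ 2 - p) / (l ^ 2 + p ^ 2)) ∂ρ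
      = ∫⁻ l, ∫⁻ x, Set.indicator {q : ℝ × ℝ | q.1 < q.2 ∧ q.2 ≤ s}
          (fun q => ENNReal.ofReal (2 * p * (1 - p ^ 2) * q.2 / (q.2 ^ 2 + p ^ 2) ^ 2)) (l, x) ∂volume ∂ρ := by
        apply lintegral_congr_ae
        filter_upwards [hae] with l hl
        rw [key l hl, ← lintegral_indicator measurableSet_Ioc]
        congr 1
    _ = ∫⁻ x, ∫⁻ l, Set.indicator {q : ℝ × ℝ | q.1 < q.2 ∧ q.2 ≤ s}
          (fun q => ENNReal.ofReal (2 * p * (1 - p ^ 2) * q.2 / (q.2 ^ 2 + p ^ 2) ^ 2)) (l, x) ∂ρ ∂volume := by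
        apply lintegral_lintegral_swap
        exact ((hφm.comp measurable_snd).indicator hT).aemeasurable
    _ ≤ ∫⁻ x, Set.indicator (Ioc (0:ℝ) s)
          (fun x => ENNReal.ofReal (β * (2 * p * (1 - p ^ 2)) * x ^ 2 / (x ^ 2 + p ^ 2) ^ 2)) x ∂volume := by
        apply lintegral_mono
        intro x
        dsimp only
        by_cases hx : x ≤ s
        · have hslice : (fun l => Set.indicator {q : ℝ × ℝ | q.1 < q.2 ∧ q.2 ≤ s}
              (fun q => ENNReal.ofReal (2 * p * (1 - p ^ 2) * q.2 / (q.2 ^ 2 + p ^ 2) ^ 2)) (l, x))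
              = Set.indicator (Iio x) (fun _ => ENNReal.ofReal (2 * p * (1 - p ^ 2) * x / (x ^ 2 + p ^ 2) ^ 2)) := by
            funext l
            simp only [Set.indicator_apply, Set.mem_setOf_eq, Set.mem_Iio, hx, and_true]
          rw [hslice, lintegral_indicator_const measurableSet_Iio]
          by_cases hx0 : 0 < x
          · rw [Set.indicator_of_mem (Set.mem_Ioc.mpr ⟨hx0, hx⟩)]
            have hφ0 : 0 ≤ 2 * p * (1 - p ^ 2) * x / (x ^ 2 + p ^ 2) ^ 2 :=
              div_nonneg (by nlinarith) (by positivity)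
            calc ENNReal.ofReal (2 * p * (1 - p ^ 2) * x / (x ^ 2 + p ^ 2) ^ 2) * ρ (Iio x)
                ≤ ENNReal.ofReal (2 * p * (1 - p ^ 2) * x / (x ^ 2 + p ^ 2) ^ 2) * ENNReal.ofReal (β * x) :=
                  mul_le_mul_right (hρ1 x hx0) _
              _ = ENNReal.ofReal ((2 * p * (1 - p ^ 2) * x / (x ^ 2 + p ^ 2) ^ 2) * (β * x)) :=
                  (ENNReal.ofReal_mul hφ0).symm
              _ = ENNReal.ofReal (β * (2 * p * (1 - p ^ 2)) * x ^ 2 / (x ^ 2 + p ^ 2) ^ 2) := by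
                  congr 1
                  ring
          · have hφneg : 2 * p * (1 - p ^ 2) * x / (x ^ 2 + p ^ 2) ^ 2 ≤ 0 := by
              apply div_nonpos_of_nonpos_of_nonneg (by nlinarith [not_lt.mp hx0]) (by positivity)
            rw [ENNReal.ofReal_eq_zero.mpr hφneg, zero_mul]
            exact zero_le
        · have hz : (fun l => Set.indicator {q : ℝ × ℝ | q.1 < q.2 ∧ q.2 ≤ s}
              (fun q => ENNReal.ofReal (2 * p * (1 - p ^ 2) * q.2 / (q.2 ^ 2 + p ^ 2) ^ 2)) (l, x))
              = fun _ => (0 : ENNReal) := by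
            funext l
            simp only [Set.indicator_apply, Set.mem_setOf_eq]
            rw [if_neg (fun h => hx h.2)]
          rw [hz]
          simp
    _ = ∫⁻ x in Ioc (0:ℝ) s, ENNReal.ofReal (β * (2 * p * (1 - p ^ 2)) * x ^ 2 / (x ^ 2 + p ^ 2) ^ 2) ∂volume := by
        rw [lintegral_indicator measurableSet_Ioc]
    _ ≤ ENNReal.ofReal (Real.pi * max β γ / 2) := by
        have hψc : Continuous fun x : ℝ => β * (2 * p * (1 - p ^ 2)) * x ^ 2 / (x ^ 2 + p ^ 2) ^ 2 := by
          apply Continuous.div (by continuity) (by continuity)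
          intro x; positivity
        have hBd : ∀ x : ℝ, HasDerivAt (fun x : ℝ =>
            β * (2 * p * (1 - p ^ 2)) / (2 * p) * Real.arctan (x / p)
              - β * (2 * p * (1 - p ^ 2)) / 2 * (x / (x ^ 2 + p ^ 2)))
            (β * (2 * p * (1 - p ^ 2)) * x ^ 2 / (x ^ 2 + p ^ 2) ^ 2) x := by
          intro x
          have h := ((schober_arctan_deriv p hp x).const_mul (β * (2 * p * (1 - p ^ 2)) / (2 * p))).sub
            ((schober_rat_deriv p hp x).const_mul (β * (2 * p * (1 - p ^ 2)) / 2))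
          refine h.congr_deriv ?_
          have hd1 : x ^ 2 + p ^ 2 ≠ 0 := by positivity
          field_simp
          ring
        have hFTC : ∫ x in (0:ℝ)..s, β * (2 * p * (1 - p ^ 2)) * x ^ 2 / (x ^ 2 + p ^ 2) ^ 2
            = (β * (2 * p * (1 - p ^ 2)) / (2 * p) * Real.arctan (s / p)
                - β * (2 * p * (1 - p ^ 2)) / 2 * (s / (s ^ 2 + p ^ 2)))
              - (β * (2 * p * (1 - p ^ 2)) / (2 * p) * Real.arctan (0 / p)
                - β * (2 * p * (1 - p ^ 2)) / 2 * ((0:ℝ) / (0 ^ 2 + p ^ 2))) :=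
          intervalIntegral.integral_eq_sub_of_hasDerivAt (fun x _ => hBd x)
            (hψc.intervalIntegrable 0 s)
        rw [intervalIntegral.integral_of_le hs0.le] at hFTC
        have hnn : 0 ≤ᵐ[volume.restrict (Ioc (0:ℝ) s)]
            fun x => β * (2 * p * (1 - p ^ 2)) * x ^ 2 / (x ^ 2 + p ^ 2) ^ 2 := by
          apply ae_of_all
          intro x
          apply div_nonneg (mul_nonneg (mul_nonneg hβ.le hc) (sq_nonneg x)) (by positivity)
        rw [← ofReal_integral_eq_lintegral_ofReal (hψc.integrableOn_Ioc) hnn, hFTC]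
        apply ENNReal.ofReal_le_ofReal
        have harct : Real.arctan (s / p) ≤ π / 2 := (Real.arctan_lt_pi_div_two _).le
        have hC1 : 0 ≤ β * (2 * p * (1 - p ^ 2)) / (2 * p) :=
          div_nonneg (mul_nonneg hβ.le hc) (by positivity)
        have hC1β : β * (2 * p * (1 - p ^ 2)) / (2 * p) ≤ β := by
          rw [div_le_iff₀ (by positivity)]
          nlinarith [mul_nonneg hβ.le (mul_nonneg hp.le (sq_nonneg p))]
        have hsub : 0 ≤ β * (2 * p * (1 - p ^ 2)) / 2 * (s / (s ^ 2 + p ^ 2)) := by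
          apply mul_nonneg (by positivity)
          positivity
        have hπ : (0:ℝ) ≤ π / 2 := by positivity
        have h1' : β * (2 * p * (1 - p ^ 2)) / (2 * p) * Real.arctan (s / p)
            ≤ β * (2 * p * (1 - p ^ 2)) / (2 * p) * (π / 2) := mul_le_mul_of_nonneg_left harct hC1
        have h2' : β * (2 * p * (1 - p ^ 2)) / (2 * p) * (π / 2) ≤ β * (π / 2) :=
          mul_le_mul_of_nonneg_right hC1β hπ
        have h3' : β * (π / 2) ≤ max β γ * (π / 2) :=
          mul_le_mul_of_nonneg_right (le_max_left β γ) hπ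
        have h4' : max β γ * (π / 2) = Real.pi * max β γ / 2 := by ring
        simp only [zero_div, Real.arctan_zero, mul_zero, sub_zero, zero_pow, zero_add]
        linarith


/-- Part 1 of Schober's representation theorem: if the measure
`dρ(λ) = dμ(λ)/(1+λ²)` on `(0,∞)` is finite with `ρ((0,ε]) ≤ βε` and
`ρ([t,∞)) ≤ γ/t`, then `h(p) = (1/π) ∫ p/(λ²+p²) dμ(λ)` satisfies
`|h(p)| ≤ ρ(ℝ₊)/π + max{β,γ}/2` for all `p > 0` (stated here multiplied by `π`). -/
theorem schober_symbol_bounded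
    (μ : Measure ℝ) (β γ : ℝ) (hβ : 0 < β) (hγ : 0 < γ)
    (hfin : ∫⁻ l in Ioi (0:ℝ), ENNReal.ofReal (1 / (1 + l ^ 2)) ∂μ < ⊤)
    (h1 : ∀ ε : ℝ, 0 < ε →
      ∫⁻ l in Ioc (0:ℝ) ε, ENNReal.ofReal (1 / (1 + l ^ 2)) ∂μ ≤ ENNReal.ofReal (β * ε))
    (h2 : ∀ t : ℝ, 0 < t →
      ∫⁻ l in Ici t, ENNReal.ofReal (1 / (1 + l ^ 2)) ∂μ ≤ ENNReal.ofReal (γ / t)) :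
    ∀ p : ℝ, 0 < p →
      ∫⁻ l in Ioi (0:ℝ), ENNReal.ofReal (p / (l ^ 2 + p ^ 2)) ∂μ
        ≤ (∫⁻ l in Ioi (0:ℝ), ENNReal.ofReal (1 / (1 + l ^ 2)) ∂μ)
            + ENNReal.ofReal (Real.pi * max β γ / 2) := by
  intro p hp
  set ρ : Measure ℝ := (μ.restrict (Ioi (0:ℝ))).withDensity
    (fun l => ENNReal.ofReal (1 / (1 + l ^ 2))) with hρ_def
  have hgm : Measurable fun l : ℝ => ENNReal.ofReal (1 / (1 + l ^ 2)) := by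
    apply Measurable.ennreal_ofReal
    apply Continuous.measurable
    exact Continuous.div continuous_const (by continuity) (fun x => by positivity)
  haveI : IsFiniteMeasure ρ := by
    constructor
    rw [hρ_def, withDensity_apply _ MeasurableSet.univ, Measure.restrict_univ]
    exact hfin
  have hae : ∀ᵐ l ∂ρ, 0 < l := by
    rw [ae_iff]
    have hcompl : {l : ℝ | ¬ 0 < l} = (Ioi (0:ℝ))ᶜ := by ext l; simp
    rw [hρ_def, hcompl, withDensity_apply _ measurableSet_Ioi.compl,
      Measure.restrict_restrict measurableSet_Ioi.compl, compl_inter_self,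
      Measure.restrict_empty, lintegral_zero_measure]
  have hρ2 : ∀ x : ℝ, 0 < x → ρ (Ici x) ≤ ENNReal.ofReal (γ / x) := by
    intro x hx
    have hss : Ici x ∩ Ioi (0:ℝ) = Ici x :=
      inter_eq_left.mpr (fun y hy => lt_of_lt_of_le hx hy)
    rw [hρ_def, withDensity_apply _ measurableSet_Ici, Measure.restrict_restrict measurableSet_Ici,
      hss]
    exact h2 x hx
  have hρ1 : ∀ x : ℝ, 0 < x → ρ (Iio x) ≤ ENNReal.ofReal (β * x) := by
    intro x hx
    rw [hρ_def, withDensity_apply _ measurableSet_Iio, Measure.restrict_restrict measurableSet_Iio]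
    refine le_trans (lintegral_mono_set ?_) (h1 x hx)
    rintro y ⟨hy1, hy2⟩
    exact ⟨hy2, hy1.le⟩
  have hFm : Measurable fun l : ℝ => ENNReal.ofReal ((p - 1) * (l ^ 2 - p) / (l ^ 2 + p ^ 2)) := by
    apply Measurable.ennreal_ofReal
    apply Continuous.measurable
    exact Continuous.div (by continuity) (by continuity) (fun x => by positivity)
  have htail : ∫⁻ l, ENNReal.ofReal ((p - 1) * (l ^ 2 - p) / (l ^ 2 + p ^ 2)) ∂ρ
      ≤ ENNReal.ofReal (Real.pi * max β γ / 2) := by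
    rcases le_or_gt 1 p with h1p | h1p
    · exact schober_case_ge μ β γ hβ hγ ρ hae hρ2 p hp h1p
    · exact schober_case_le β γ hβ hγ ρ hae hρ1 p hp h1p.le
  have heq : ∫⁻ l, ENNReal.ofReal ((p - 1) * (l ^ 2 - p) / (l ^ 2 + p ^ 2)) ∂ρ
      = ∫⁻ l in Ioi (0:ℝ), ENNReal.ofReal (1 / (1 + l ^ 2))
          * ENNReal.ofReal ((p - 1) * (l ^ 2 - p) / (l ^ 2 + p ^ 2)) ∂μ := by
    rw [hρ_def, lintegral_withDensity_eq_lintegral_mul _ hgm hFm]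
    rfl
  calc ∫⁻ l in Ioi (0:ℝ), ENNReal.ofReal (p / (l ^ 2 + p ^ 2)) ∂μ
      ≤ ∫⁻ l in Ioi (0:ℝ), (ENNReal.ofReal (1 / (1 + l ^ 2))
          + ENNReal.ofReal (1 / (1 + l ^ 2))
            * ENNReal.ofReal ((p - 1) * (l ^ 2 - p) / (l ^ 2 + p ^ 2))) ∂μ := by
        apply lintegral_mono
        intro l
        dsimp only
        have hid : p / (l ^ 2 + p ^ 2)
            = 1 / (1 + l ^ 2) + (1 / (1 + l ^ 2)) * ((p - 1) * (l ^ 2 - p) / (l ^ 2 + p ^ 2)) := by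
          have hd1 : (1:ℝ) + l ^ 2 ≠ 0 := by positivity
          have hd2 : l ^ 2 + p ^ 2 ≠ 0 := by positivity
          field_simp
          ring
        rw [hid]
        refine le_trans ENNReal.ofReal_add_le (add_le_add_right (le_of_eq ?_) _)
        exact ENNReal.ofReal_mul (by positivity)
    _ = (∫⁻ l in Ioi (0:ℝ), ENNReal.ofReal (1 / (1 + l ^ 2)) ∂μ)
          + ∫⁻ l in Ioi (0:ℝ), ENNReal.ofReal (1 / (1 + l ^ 2))
              * ENNReal.ofReal ((p - 1) * (l ^ 2 - p) / (l ^ 2 + p ^ 2)) ∂μ :=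
        lintegral_add_left hgm _
    _ ≤ (∫⁻ l in Ioi (0:ℝ), ENNReal.ofReal (1 / (1 + l ^ 2)) ∂μ)
          + ENNReal.ofReal (Real.pi * max β γ / 2) :=
        add_le_add_right (heq ▸ htail) _
end

section
/- Let $(S,\sharp)$ be an involutive semigroup, $U_+: S \to B(\mathcal{F})$ a representation, and $H \ge 0$ a positive $U_+$-Hankel operator, i.e. $HU_+(s) = U_+(s^\sharp)^* H$ for $s \in S$. Let $\hat{\mathcal{F}}$ be the Hilbert space completion of $\mathcal{F}/\{\xi : \langle\xi,H\xi\rangle = 0\}$ with respect to $\langle\xi,\eta\rangle_H = \langle\xi,H\eta\rangle$, with quotient map $q$. Then there is a unique map $\hat{U}: S \to B(\hat{\mathcal{F}})$ with $\hat{U}(s)\circ q = q \circ U_+(s)$, it satisfies $\hat{U}(st) = \hat{U}(s)\hat{U}(t)$ and $\hat{U}(s)^* = \hat{U}(s^\sharp)$, and $\|\hat{U}(s)\| \le \max(\|U_+(s)\|, \|U_+(s^\sharp)\|)$ for every $s \in S$. -/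
open MeasureTheory


open ContinuousLinearMap in
lemma os_key
    {S : Type*} [Semigroup S] (sharp : S → S)
    (hsharp_mul : ∀ s t : S, sharp (s * t) = sharp t * sharp s)
    (hsharp_inv : ∀ s : S, sharp (sharp s) = s)
    {F G : Type*} [NormedAddCommGroup F] [InnerProductSpace ℂ F] [CompleteSpace F]
    [NormedAddCommGroup G] [InnerProductSpace ℂ G] [CompleteSpace G]
    (U : S → F →L[ℂ] F) (hU : ∀ s t : S, U (s * t) = (U s).comp (U t))
    (H : F →L[ℂ] F) (hpos : H.IsPositive)
    (hHankel : ∀ s : S, H.comp (U s) = (ContinuousLinearMap.adjoint (U (sharp s))).comp H)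
    (q : F →L[ℂ] G)
    (hinner : ∀ ξ η : F, (inner ℂ (q ξ) (q η) : ℂ) = inner ℂ ξ (H η))
    (s : S) (ξ : F) :
    ‖q (U s ξ)‖ ≤ max ‖U s‖ ‖U (sharp s)‖ * ‖q ξ‖ := by
  classical
  -- basic inner ℂ product facts
  have hadj : ContinuousLinearMap.adjoint H = H :=
    ContinuousLinearMap.isSelfAdjoint_iff'.mp hpos.isSelfAdjoint
  have hsa : ∀ x y : F, (inner ℂ (H x) y : ℂ) = inner ℂ x (H y) := by
    intro x y
    conv_lhs => rw [← hadj]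
    rw [ContinuousLinearMap.adjoint_inner_left]
  have hnormsq : ∀ z : F, (‖q z‖ : ℂ)^2 = inner ℂ z (H z) := by
    intro z
    rw [← hinner z z, inner_self_eq_norm_sq_to_K]
    norm_cast
  -- Step 1 : ‖q (U t η)‖^2 ≤ ‖q η‖ * ‖q (U (sharp t * t) η)‖
  have step1 : ∀ (t : S) (η : F),
      ‖q (U t η)‖^2 ≤ ‖q η‖ * ‖q (U (sharp t * t) η)‖ := by
    intro t η
    have h1 : (inner ℂ (U t η) (H (U t η)) : ℂ) = inner ℂ (U (sharp t * t) η) (H η) := by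
      have := congrArg (fun (A : F →L[ℂ] F) => A η) (hHankel t)
      simp only [ContinuousLinearMap.comp_apply] at this
      rw [this, ContinuousLinearMap.adjoint_inner_right, ← ContinuousLinearMap.comp_apply,
        ← hU]
    have h2 : (inner ℂ (U (sharp t * t) η) (H η) : ℂ)
        = (starRingEnd ℂ) (inner ℂ (q η) (q (U (sharp t * t) η))) := by
      rw [hinner, ← hsa, ← inner_conj_symm]
    have h3 : (‖q (U t η)‖ : ℂ)^2 = (starRingEnd ℂ) (inner ℂ (q η) (q (U (sharp t * t) η))) := by
      rw [hnormsq, h1, h2]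
    have h4 : (‖q (U t η)‖:ℝ)^2
        = ((starRingEnd ℂ) (inner ℂ (q η) (q (U (sharp t * t) η)) : ℂ)).re := by
      rw [← h3, ← Complex.ofReal_pow, Complex.ofReal_re]
    calc ‖q (U t η)‖^2
        = ((starRingEnd ℂ) (inner ℂ (q η) (q (U (sharp t * t) η)) : ℂ)).re := h4
      _ ≤ ‖(starRingEnd ℂ) (inner ℂ (q η) (q (U (sharp t * t) η)) : ℂ)‖ :=
          Complex.re_le_norm _
      _ = ‖(inner ℂ (q η) (q (U (sharp t * t) η)) : ℂ)‖ := RCLike.norm_conj _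
      _ ≤ ‖q η‖ * ‖q (U (sharp t * t) η)‖ := norm_inner_le_norm _ _
  -- The sequence of repeated squarings
  set a : S := sharp s * s with ha
  let tseq : ℕ → S := fun n => Nat.rec a (fun _ x => x * x) n
  have ht0 : tseq 0 = a := rfl
  have htsucc : ∀ n, tseq (n+1) = tseq n * tseq n := fun n => rfl
  have hts : ∀ n, sharp (tseq n) = tseq n := by
    intro n
    induction n with
    | zero => rw [ht0, ha, hsharp_mul, hsharp_inv]
    | succ n ih => rw [htsucc, hsharp_mul, ih]
  set K : ℝ := ‖q ξ‖ with hK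
  set M : ℝ := ‖U a‖ with hM
  set C : ℝ := Real.sqrt ‖H‖ * ‖ξ‖ with hC
  set d : ℕ → ℝ := fun n => ‖q (U (tseq n) ξ)‖ with hd
  have hKnn : 0 ≤ K := norm_nonneg _
  have hMnn : 0 ≤ M := norm_nonneg _
  have hCnn : 0 ≤ C := mul_nonneg (Real.sqrt_nonneg _) (norm_nonneg _)
  have hdnn : ∀ n, 0 ≤ d n := fun n => norm_nonneg _
  have hiter0 : ∀ n, d n ^ 2 ≤ K * d (n+1) := by
    intro n
    have := step1 (tseq n) ξ
    rwa [hts n, ← htsucc n] at this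
  -- d n ≤ C * M^(2^n)
  have hqz : ∀ z : F, ‖q z‖ ≤ Real.sqrt ‖H‖ * ‖z‖ := by
    intro z
    have h1 : ‖q z‖^2 ≤ ‖H‖ * ‖z‖^2 := by
      have h2 : (‖q z‖:ℝ)^2 = (inner ℂ z (H z) : ℂ).re := by
        rw [← hnormsq z, ← Complex.ofReal_pow, Complex.ofReal_re]
      rw [h2]
      calc (inner ℂ z (H z) : ℂ).re ≤ ‖(inner ℂ z (H z) : ℂ)‖ := Complex.re_le_norm _
        _ ≤ ‖z‖ * ‖H z‖ := norm_inner_le_norm _ _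
        _ ≤ ‖z‖ * (‖H‖ * ‖z‖) := by
            exact mul_le_mul_of_nonneg_left (H.le_opNorm z) (norm_nonneg _)
        _ = ‖H‖ * ‖z‖^2 := by ring
    have := Real.sqrt_le_sqrt h1
    rwa [Real.sqrt_sq (norm_nonneg _), Real.sqrt_mul (norm_nonneg _),
      Real.sqrt_sq (norm_nonneg _)] at this
  have hUn : ∀ n, ‖U (tseq n)‖ ≤ M ^ (2^n) := by
    intro n
    induction n with
    | zero =>
      have : M ^ (2^0) = M := by norm_num
      rw [this, ht0, hM]
    | succ n ih =>
      have h1 : ‖U (tseq (n+1))‖ ≤ ‖U (tseq n)‖ * ‖U (tseq n)‖ := by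
        rw [htsucc, hU]
        exact ContinuousLinearMap.opNorm_comp_le _ _
      calc ‖U (tseq (n+1))‖ ≤ ‖U (tseq n)‖ * ‖U (tseq n)‖ := h1
        _ ≤ M^(2^n) * M^(2^n) := mul_le_mul ih ih (norm_nonneg _)
            (le_trans (norm_nonneg _) ih)
        _ = M^(2^(n+1)) := by rw [← pow_add]; ring_nf
  have hdC : ∀ n, d n ≤ C * M ^ (2^n) := by
    intro n
    calc d n ≤ Real.sqrt ‖H‖ * ‖U (tseq n) ξ‖ := hqz _
      _ ≤ Real.sqrt ‖H‖ * (‖U (tseq n)‖ * ‖ξ‖) :=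
          mul_le_mul_of_nonneg_left ((U (tseq n)).le_opNorm ξ) (Real.sqrt_nonneg _)
      _ ≤ Real.sqrt ‖H‖ * (M^(2^n) * ‖ξ‖) := by
          refine mul_le_mul_of_nonneg_left ?_ (Real.sqrt_nonneg _)
          exact mul_le_mul_of_nonneg_right (hUn n) (norm_nonneg _)
      _ = C * M^(2^n) := by rw [hC]; ring
  -- iterate : d 0 ^ (2^n) ≤ K^(2^n - 1) * d n
  have hiter : ∀ n, d 0 ^ (2^n) ≤ K ^ (2^n - 1) * d n := by
    intro n
    induction n with
    | zero => simpa using le_refl (d 0)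
    | succ n ih =>
      have h2n : 1 ≤ 2^n := Nat.one_le_two_pow
      have h1 : d 0 ^ (2^(n+1)) = (d 0 ^ (2^n))^2 := by
        rw [← pow_mul]; ring_nf
      have h2 : (d 0 ^ (2^n))^2 ≤ (K ^ (2^n - 1) * d n)^2 :=
        pow_le_pow_left₀ (pow_nonneg (hdnn 0) _) ih 2
      have h3 : (K ^ (2^n - 1) * d n)^2 = K ^ (2*(2^n - 1)) * (d n)^2 := by
        rw [mul_pow, ← pow_mul]; ring_nf
      have h4 : K ^ (2*(2^n - 1)) * (d n)^2 ≤ K ^ (2*(2^n - 1)) * (K * d (n+1)) :=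
        mul_le_mul_of_nonneg_left (hiter0 n) (pow_nonneg hKnn _)
      have h5 : K ^ (2*(2^n - 1)) * (K * d (n+1)) = K ^ (2^(n+1) - 1) * d (n+1) := by
        have he : 2*(2^n - 1) + 1 = 2^(n+1) - 1 := by
          have : 2^(n+1) = 2 * 2^n := by ring
          omega
        rw [← he, pow_succ, mul_assoc]
      rw [h1, ← h5]
      exact le_trans h2 (le_trans (le_of_eq h3) h4)
  -- main claim : d 0 ≤ M * K
  have hmain : d 0 ≤ M * K := by
    by_contra hcon
    push_neg at hcon
    have hcomb : ∀ n, d 0 ^ (2^n) ≤ K ^ (2^n - 1) * (C * M ^ (2^n)) := by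
      intro n
      exact le_trans (hiter n) (mul_le_mul_of_nonneg_left (hdC n) (pow_nonneg hKnn _))
    rcases eq_or_lt_of_le hKnn with hK0 | hKpos
    · -- K = 0
      have h2 := hcomb 1
      rw [← hK0] at h2
      simp at h2
      have hd0 : d 0 = 0 := by nlinarith [hdnn 0]
      rw [hd0, ← hK0, mul_zero] at hcon
      exact absurd hcon (lt_irrefl 0)
    · rcases eq_or_lt_of_le hMnn with hM0 | hMpos
      · -- M = 0
        have h2 := hcomb 0
        rw [← hM0] at h2
        simp at h2
        nlinarith [hdnn 0]
      · -- K > 0, M > 0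
        set y : ℝ := M * K with hy
        have hypos : 0 < y := mul_pos hMpos hKpos
        have hr : 1 < d 0 / y := (one_lt_div hypos).2 hcon
        obtain ⟨m, hm⟩ := pow_unbounded_of_one_lt (C / K) hr
        have hmle : (d 0 / y)^m ≤ (d 0 / y)^(2^m) :=
          pow_le_pow_right₀ (le_of_lt hr) (Nat.le_of_lt (Nat.lt_two_pow_self (n := m)))
        have hlt : C / K < (d 0 / y)^(2^m) := lt_of_lt_of_le hm hmle
        set N : ℕ := 2^m with hN
        have hN1 : 1 ≤ N := Nat.one_le_two_pow
        have heq : K ^ (N - 1) * (C * M ^ N) = (C / K) * y ^ N := by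
          have h1 : K ^ N = K ^ (N-1) * K := by
            rw [← pow_succ]
            congr 1
            omega
          rw [hy, mul_pow, h1]
          field_simp
        have h2 : d 0 ^ N ≤ (C / K) * y ^ N := by
          rw [← heq]; exact hcomb m
        have h3 : (C / K) * y ^ N < (d 0 / y)^N * y ^ N :=
          mul_lt_mul_of_pos_right hlt (pow_pos hypos N)
        have h4 : (d 0 / y)^N * y ^ N = d 0 ^ N := by
          rw [div_pow]
          field_simp
        rw [h4] at h3
        exact absurd (lt_of_le_of_lt h2 h3) (lt_irrefl _)
  -- conclude
  have hstart : ‖q (U s ξ)‖^2 ≤ K * d 0 := step1 s ξ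
  set Cm : ℝ := max ‖U s‖ ‖U (sharp s)‖ with hCm
  have hCmnn : 0 ≤ Cm := le_trans (norm_nonneg _) (le_max_left _ _)
  have hMle : M ≤ Cm * Cm := by
    have h1 : ‖U (sharp s * s)‖ ≤ ‖U (sharp s)‖ * ‖U s‖ := by
      rw [hU]; exact ContinuousLinearMap.opNorm_comp_le _ _
    calc M ≤ ‖U (sharp s)‖ * ‖U s‖ := h1
      _ ≤ Cm * Cm := mul_le_mul (le_max_right _ _) (le_max_left _ _)
          (norm_nonneg _) hCmnn
  have hfin : ‖q (U s ξ)‖^2 ≤ (Cm * K)^2 := by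
    calc ‖q (U s ξ)‖^2 ≤ K * d 0 := hstart
      _ ≤ K * (M * K) := mul_le_mul_of_nonneg_left hmain hKnn
      _ ≤ K * ((Cm*Cm) * K) := by
          refine mul_le_mul_of_nonneg_left ?_ hKnn
          exact mul_le_mul_of_nonneg_right hMle hKnn
      _ = (Cm * K)^2 := by ring
  exact (abs_le_of_sq_le_sq' hfin (mul_nonneg hCmnn hKnn)).2

/-- Generalized Osterwalder–Schrader transform: given a representation `U₊` of an
involutive semigroup, a positive `U₊`-Hankel operator `H`, and the Hilbert space
completion `G` of `F` with respect to `⟨ξ,η⟩_H = ⟨ξ,Hη⟩` (with canonical map `q`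
of dense range), there is a unique `Û : S → B(G)` with `Û(s) ∘ q = q ∘ U₊(s)`; it is
multiplicative, satisfies `Û(s)* = Û(s♯)` and `‖Û(s)‖ ≤ max(‖U₊(s)‖, ‖U₊(s♯)‖)`. -/
theorem os_transform
    {S : Type*} [Semigroup S] (sharp : S → S)
    (hsharp_mul : ∀ s t : S, sharp (s * t) = sharp t * sharp s)
    (hsharp_inv : ∀ s : S, sharp (sharp s) = s)
    {F G : Type*} [NormedAddCommGroup F] [InnerProductSpace ℂ F] [CompleteSpace F]
    [NormedAddCommGroup G] [InnerProductSpace ℂ G] [CompleteSpace G]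
    (U : S → F →L[ℂ] F) (hU : ∀ s t : S, U (s * t) = (U s).comp (U t))
    (H : F →L[ℂ] F) (hpos : H.IsPositive)
    (hHankel : ∀ s : S, H.comp (U s) = (ContinuousLinearMap.adjoint (U (sharp s))).comp H)
    (q : F →L[ℂ] G) (hq : DenseRange q)
    (hinner : ∀ ξ η : F, (inner ℂ (q ξ) (q η) : ℂ) = inner ℂ ξ (H η)) :
    (∃! Uhat : S → G →L[ℂ] G, ∀ s : S, (Uhat s).comp q = q.comp (U s)) ∧
      ∀ Uhat : S → G →L[ℂ] G, (∀ s : S, (Uhat s).comp q = q.comp (U s)) →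
        (∀ s t : S, Uhat (s * t) = (Uhat s).comp (Uhat t)) ∧
        (∀ s : S, ContinuousLinearMap.adjoint (Uhat s) = Uhat (sharp s)) ∧
        (∀ s : S, ‖Uhat s‖ ≤ max ‖U s‖ ‖U (sharp s)‖) := by
  classical
  have key : ∀ (s : S) (ξ : F), ‖q (U s ξ)‖ ≤ max ‖U s‖ ‖U (sharp s)‖ * ‖q ξ‖ :=
    os_key sharp hsharp_mul hsharp_inv U hU H hpos hHankel q hinner
  -- well-definedness
  have hwd : ∀ (s : S) (ξ η : F), q ξ = q η → q (U s ξ) = q (U s η) := by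
    intro s ξ η h
    have h1 : ‖q (U s ξ) - q (U s η)‖ ≤ max ‖U s‖ ‖U (sharp s)‖ * ‖q ξ - q η‖ := by
      have := key s (ξ - η)
      simpa [map_sub] using this
    rw [h, sub_self, norm_zero, mul_zero] at h1
    have := norm_sub_eq_zero_iff.mp (le_antisymm h1 (norm_nonneg _))
    exact this
  -- uniqueness helper
  have heq : ∀ A B : G →L[ℂ] G, A.comp q = B.comp q → A = B := by
    intro A B h
    apply ContinuousLinearMap.coeFn_injective
    refine hq.equalizer A.continuous B.continuous ?_
    ext ξ
    exact congrArg (fun (T : F →L[ℂ] G) => T ξ) h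
  -- the dense submodule
  set p : Submodule ℂ G := LinearMap.range (q : F →ₗ[ℂ] G) with hp
  have hpq : ∀ x : p, ∃ ξ : F, q ξ = (x : G) := fun x => x.2
  have hqmem : ∀ ξ : F, q ξ ∈ p := fun ξ => ⟨ξ, rfl⟩
  have hpdense : Dense (p : Set G) := by
    have : (Set.range q) ⊆ (p : Set G) := by
      rintro x ⟨ξ, rfl⟩; exact hqmem ξ
    exact Dense.mono this hq
  -- construction of Uhat₀
  have hexists : ∀ s : S, ∃ A : G →L[ℂ] G, A.comp q = q.comp (U s) := by
    intro s
    set Cm : ℝ := max ‖U s‖ ‖U (sharp s)‖ with hCm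
    have hCmnn : 0 ≤ Cm := le_trans (norm_nonneg _) (le_max_left _ _)
    -- the function on p
    let f0 : p → G := fun x => q (U s (hpq x).choose)
    have hf0 : ∀ (x : p) (ξ : F), q ξ = (x : G) → f0 x = q (U s ξ) := by
      intro x ξ hξ
      exact hwd s _ _ (((hpq x).choose_spec).trans hξ.symm)
    have hadd : ∀ x y : p, f0 (x + y) = f0 x + f0 y := by
      intro x y
      obtain ⟨ξ, hξ⟩ := hpq x
      obtain ⟨η, hη⟩ := hpq y
      have hxy : q (ξ + η) = ((x + y : p) : G) := by
        rw [map_add, hξ, hη]; rfl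
      rw [hf0 _ _ hxy, hf0 _ _ hξ, hf0 _ _ hη, map_add, map_add]
    have hsmul : ∀ (c : ℂ) (x : p), f0 (c • x) = c • f0 x := by
      intro c x
      obtain ⟨ξ, hξ⟩ := hpq x
      have hcx : q (c • ξ) = ((c • x : p) : G) := by
        rw [_root_.map_smul, hξ]; rfl
      rw [hf0 _ _ hcx, hf0 _ _ hξ, _root_.map_smul, _root_.map_smul]
    have hbound : ∀ x : p, ‖f0 x‖ ≤ Cm * ‖x‖ := by
      intro x
      obtain ⟨ξ, hξ⟩ := hpq x
      rw [hf0 _ _ hξ]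
      calc ‖q (U s ξ)‖ ≤ Cm * ‖q ξ‖ := key s ξ
        _ = Cm * ‖x‖ := by rw [hξ]; rfl
    let flin : p →ₗ[ℂ] G :=
      { toFun := f0, map_add' := hadd, map_smul' := hsmul }
    let f : p →L[ℂ] G := LinearMap.mkContinuous flin Cm hbound
    let e : p →L[ℂ] G := p.subtypeL
    have h_e : IsUniformInducing (e : p → G) := by
      have : Isometry (e : p → G) := isometry_subtype_coe
      exact this.isUniformInducing
    have h_dense : DenseRange (e : p → G) := by
      have : Set.range (e : p → G) = (p : Set G) := Subtype.range_coe
      rw [DenseRange, this]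
      exact hpdense
    refine ⟨f.extend e, ?_⟩
    ext ξ
    have h1 : q ξ = e ⟨q ξ, hqmem ξ⟩ := rfl
    simp only [ContinuousLinearMap.comp_apply]
    rw [h1, ContinuousLinearMap.extend_eq _ h_dense h_e]
    exact hf0 _ _ rfl
  choose Uhat0 hUhat0 using hexists
  constructor
  · exact ⟨Uhat0, hUhat0, fun Uhat' h' => funext fun s => heq _ _ ((h' s).trans (hUhat0 s).symm)⟩
  · intro Uhat hP
    have happ : ∀ (s : S) (ξ : F), Uhat s (q ξ) = q (U s ξ) :=
      fun s ξ => congrArg (fun (T : F →L[ℂ] G) => T ξ) (hP s)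
    refine ⟨?_, ?_, ?_⟩
    · intro s t
      apply heq
      ext ξ
      simp only [ContinuousLinearMap.comp_apply]
      rw [happ (s * t) ξ, happ t ξ, happ s (U t ξ), hU]
      rfl
    · intro s
      apply heq
      ext ξ
      simp only [ContinuousLinearMap.comp_apply]
      rw [happ (sharp s) ξ]
      refine Dense.eq_of_inner_right ℂ hpdense ?_
      rintro v ⟨η, rfl⟩
      show (inner ℂ (q η) (ContinuousLinearMap.adjoint (Uhat s) (q ξ)) : ℂ)
          = inner ℂ (q η) (q (U (sharp s) ξ))
      rw [ContinuousLinearMap.adjoint_inner_right, happ s η, hinner, hinner]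
      have hh := congrArg (fun (A : F →L[ℂ] F) => A ξ) (hHankel (sharp s))
      simp only [ContinuousLinearMap.comp_apply] at hh
      rw [hh, ContinuousLinearMap.adjoint_inner_right, hsharp_inv]
    · intro s
      refine ContinuousLinearMap.opNorm_le_bound _
        (le_trans (norm_nonneg _) (le_max_left _ _)) ?_
      intro x
      refine DenseRange.induction_on hq x ?_ ?_
      · exact isClosed_le (continuous_norm.comp (Uhat s).continuous)
          (continuous_const.mul continuous_norm)
      · intro ξ
        rw [happ s ξ]
        exact key s ξ
end
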